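/- For f(t) = t/(1-t) on [0,1), the map s(m) := 2(1-m)f(m) ∫_m^1 dt/(f(t)√((1-t)²f(t)² - (1-m)²f(m)²)) evaluates, for m ∈ (0,1), to s(m) = 2 arctan(√(1-m²)/m) - 2m log((1+√(1-m²))/m). -/

import Mathlib

open Set Filter MeasureTheory

/-- For the prototype `f(t) = t/(1-t)`, the map
`s(m) = 2(1-m)f(m) ∫_m^1 dt/(f(t)√((1-t)²f(t)² - (1-m)²f(m)²))` evaluates to
`s(m) = 2 arctan(√(1-m²)/m) - 2m log((1+√(1-m²))/m)` for `m ∈ (0,1)`. -/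
theorem stmt15 (m : ℝ) (hm : m ∈ Ioo (0:ℝ) 1)
    (f : ℝ → ℝ) (hf : ∀ t, f t = t / (1 - t)) :
    2 * (1 - m) * f m *
      ∫ t in Ioo m 1,
        1 / (f t * Real.sqrt ((1 - t) ^ 2 * (f t) ^ 2 - (1 - m) ^ 2 * (f m) ^ 2)) =
    2 * Real.arctan (Real.sqrt (1 - m ^ 2) / m) -
      2 * m * Real.log ((1 + Real.sqrt (1 - m ^ 2)) / m) := by
  obtain ⟨hm0, hm1⟩ := hm
  set g : ℝ → ℝ := fun t => (1 - t) / (t * Real.sqrt (t ^ 2 - m ^ 2)) with hg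
  -- inner simplification of the sqrt argument
  have harg : ∀ t : ℝ, t ≠ 1 → (1 - t) ^ 2 * (f t) ^ 2 = t ^ 2 := by
    intro t ht
    rw [hf]
    have : (1:ℝ) - t ≠ 0 := sub_ne_zero.mpr (Ne.symm ht)
    field_simp
  have hargm : (1 - m) ^ 2 * (f m) ^ 2 = m ^ 2 := harg m hm1.ne
  -- integrand equality on Ioo
  have key : EqOn (fun t => 1 / (f t * Real.sqrt ((1 - t) ^ 2 * (f t) ^ 2 - (1 - m) ^ 2 * (f m) ^ 2))) g (Ioo m 1) := by
    intro t ht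
    have ht1 : (1:ℝ) - t ≠ 0 := sub_ne_zero.mpr (Ne.symm ht.2.ne)
    have ht0 : (0:ℝ) < t := lt_trans hm0 ht.1
    have hpos : 0 < t ^ 2 - m ^ 2 := by nlinarith [ht.1]
    have hs : Real.sqrt (t ^ 2 - m ^ 2) ≠ 0 := (Real.sqrt_pos.mpr hpos).ne'
    have e1 : (1 - t) ^ 2 * (f t) ^ 2 - (1 - m) ^ 2 * (f m) ^ 2 = t ^ 2 - m ^ 2 := by
      rw [harg t ht.2.ne, hargm]
    show 1 / (f t * Real.sqrt ((1 - t) ^ 2 * (f t) ^ 2 - (1 - m) ^ 2 * (f m) ^ 2))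
        = (1 - t) / (t * Real.sqrt (t ^ 2 - m ^ 2))
    rw [e1, hf t]
    field_simp
  rw [setIntegral_congr_fun measurableSet_Ioo key]
  -- prefactor
  have hfm : 2 * (1 - m) * f m = 2 * m := by
    have h1m' : (1:ℝ) - m ≠ 0 := sub_ne_zero.mpr hm1.ne'
    rw [hf]; field_simp
  rw [hfm]
  -- pass to interval integral
  have hIoo : ∫ t in Ioo m 1, g t = ∫ t in m..1, g t := by
    rw [intervalIntegral.integral_of_le hm1.le, integral_Ioc_eq_integral_Ioo]
  rw [hIoo]
  -- antiderivative
  set F : ℝ → ℝ := fun t => (1/m) * Real.arctan (Real.sqrt (t ^ 2 - m ^ 2) / m)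
      - Real.log (t + Real.sqrt (t ^ 2 - m ^ 2)) with hF
  have hcont : ContinuousOn F (Icc m 1) := by
    apply ContinuousOn.sub
    · apply ContinuousOn.mul continuousOn_const
      apply Real.continuous_arctan.comp_continuousOn
      apply ContinuousOn.div_const
      exact (continuousOn_id.pow 2 |>.sub continuousOn_const).sqrt
    · apply ContinuousOn.log
      · exact continuousOn_id.add ((continuousOn_id.pow 2 |>.sub continuousOn_const).sqrt)
      · intro x hx
        have h1 : 0 < x := lt_of_lt_of_le hm0 hx.1
        have h2 : 0 ≤ Real.sqrt (x ^ 2 - m ^ 2) := Real.sqrt_nonneg _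
        positivity
  have hderiv : ∀ x ∈ Ioo m 1, HasDerivAt F (g x) x := by
    intro x hx
    have hx0 : 0 < x := lt_trans hm0 hx.1
    have hpos : 0 < x ^ 2 - m ^ 2 := by nlinarith [hx.1, hm0]
    set u := Real.sqrt (x ^ 2 - m ^ 2) with hu
    have hupos : 0 < u := Real.sqrt_pos.mpr hpos
    have husq : u ^ 2 = x ^ 2 - m ^ 2 := Real.sq_sqrt hpos.le
    have hd1 : HasDerivAt (fun t : ℝ => t ^ 2 - m ^ 2) (2 * x) x := by
      simpa using ((hasDerivAt_pow 2 x).sub_const (m ^ 2))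
    have hdu : HasDerivAt (fun t : ℝ => Real.sqrt (t ^ 2 - m ^ 2)) (x / u) x := by
      have := (Real.hasDerivAt_sqrt hpos.ne').comp x hd1
      refine this.congr_deriv ?_
      rw [← hu]; field_simp [hupos.ne']
    have hdarctan : HasDerivAt (fun t : ℝ => Real.arctan (Real.sqrt (t ^ 2 - m ^ 2) / m))
        ((1 / (1 + (u/m)^2)) * (x / u / m)) x := by
      exact (Real.hasDerivAt_arctan (u/m)).comp x (hdu.div_const m)
    have hdlog : HasDerivAt (fun t : ℝ => Real.log (t + Real.sqrt (t ^ 2 - m ^ 2)))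
        ((1 + x / u) / (x + u)) x := by
      have hsum : x + u ≠ 0 := by positivity
      exact ((hasDerivAt_id x).add hdu).log hsum
    have := ((hdarctan.const_mul (1/m)).sub hdlog)
    refine this.congr_deriv ?_
    have h1 : 1 + (u/m)^2 = x^2/m^2 := by
      field_simp
      nlinarith [husq]
    rw [hg, h1]
    have hxu : x + u ≠ 0 := by positivity
    field_simp
    nlinarith [husq, hupos, hx0]
  -- integrability
  have hint : IntervalIntegrable g volume m 1 := by
    rw [intervalIntegrable_iff_integrableOn_Ioc_of_le hm1.le]
    set c : ℝ := 1 / (m * Real.sqrt (2 * m)) with hc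
    have hcpos : 0 < c := by
      have : 0 < Real.sqrt (2 * m) := Real.sqrt_pos.mpr (by linarith)
      positivity
    have hbound_int : IntegrableOn (fun t : ℝ => c * (t - m) ^ (-(1/2) : ℝ)) (Ioc m 1) := by
      have h1 : IntervalIntegrable (fun x : ℝ => x ^ (-(1/2) : ℝ)) volume 0 (1 - m) :=
        intervalIntegral.intervalIntegrable_rpow' (by norm_num)
      have h2 := (h1.comp_sub_right m).const_mul c
      rw [zero_add, sub_add_cancel] at h2
      exact (intervalIntegrable_iff_integrableOn_Ioc_of_le hm1.le).mp h2
    apply MeasureTheory.Integrable.mono hbound_int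
    · apply ContinuousOn.aestronglyMeasurable _ measurableSet_Ioc
      apply ContinuousOn.div (continuousOn_const.sub continuousOn_id)
      · exact continuousOn_id.mul ((continuousOn_id.pow 2 |>.sub continuousOn_const).sqrt)
      · intro x hx
        have hx0 : 0 < x := lt_trans hm0 hx.1
        have hpos : 0 < x ^ 2 - m ^ 2 := by nlinarith [hx.1]
        have : 0 < Real.sqrt (x ^ 2 - m ^ 2) := Real.sqrt_pos.mpr hpos
        positivity
    · rw [ae_restrict_iff' measurableSet_Ioc]
      filter_upwards with t
      intro ht
      have ht0 : 0 < t := lt_trans hm0 ht.1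
      have htm : 0 < t - m := sub_pos.mpr ht.1
      have hpos : 0 < t ^ 2 - m ^ 2 := by nlinarith [ht.1]
      have hrpow : (t - m) ^ (-(1/2) : ℝ) = 1 / Real.sqrt (t - m) := by
        rw [Real.rpow_neg htm.le, Real.sqrt_eq_rpow, one_div, one_div]
      have hsq_le : Real.sqrt (2 * m) * Real.sqrt (t - m) ≤ Real.sqrt (t ^ 2 - m ^ 2) := by
        rw [← Real.sqrt_mul (by linarith)]
        apply Real.sqrt_le_sqrt
        nlinarith [ht.1]
      have hsqm : 0 < Real.sqrt (2 * m) := Real.sqrt_pos.mpr (by linarith)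
      have hsqt : 0 < Real.sqrt (t - m) := Real.sqrt_pos.mpr htm
      have hgpos : 0 ≤ g t := by
        apply div_nonneg (by linarith [ht.2])
        positivity
      have hbpos : 0 ≤ c * (t - m) ^ (-(1/2) : ℝ) := by positivity
      rw [Real.norm_eq_abs, Real.norm_eq_abs, abs_of_nonneg hgpos, abs_of_nonneg hbpos]
      rw [hrpow, hc]
      rw [hg]
      have hden_le : m * Real.sqrt (2 * m) * Real.sqrt (t - m) ≤ t * Real.sqrt (t ^ 2 - m ^ 2) := by
        calc m * Real.sqrt (2 * m) * Real.sqrt (t - m)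
            ≤ t * (Real.sqrt (2 * m) * Real.sqrt (t - m)) := by
              rw [mul_assoc]
              apply mul_le_mul_of_nonneg_right (le_of_lt ht.1) (by positivity)
          _ ≤ t * Real.sqrt (t ^ 2 - m ^ 2) := by
              apply mul_le_mul_of_nonneg_left hsq_le ht0.le
      calc (1 - t) / (t * Real.sqrt (t ^ 2 - m ^ 2))
          ≤ 1 / (m * Real.sqrt (2 * m) * Real.sqrt (t - m)) := by
            apply div_le_div₀ (by norm_num) (by linarith [ht0]) (by positivity) hden_le
        _ = 1 / (m * Real.sqrt (2 * m)) * (1 / Real.sqrt (t - m)) := by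
            rw [div_mul_div_comm, one_mul]
  -- FTC
  have hFTC := intervalIntegral.integral_eq_sub_of_hasDeriv_right_of_le hm1.le hcont
    (fun x hx => (hderiv x hx).hasDerivWithinAt) hint
  rw [hFTC]
  -- evaluate F 1 and F m
  have hFm : F m = (1/m) * Real.arctan 0 - Real.log m := by
    simp [hF]
  have hF1 : F 1 = (1/m) * Real.arctan (Real.sqrt (1 - m ^ 2) / m)
      - Real.log (1 + Real.sqrt (1 - m ^ 2)) := by
    simp [hF]
  rw [hF1, hFm, Real.arctan_zero]
  have h1m : (0:ℝ) < 1 + Real.sqrt (1 - m ^ 2) := by positivity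
  rw [Real.log_div h1m.ne' hm0.ne']
  field_simp
  ring
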